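/- For coprime positive integers p and q, the assignment Δ ↦ D(Δ) := {(x,y) ∈ R_+^{p,q} : pq − qx − py ∈ Δ} is well defined (each D(Δ) is a Young diagram contained in R_+^{p,q}) and is a bijection from the set of 0-normalized Γ^{p,q}-semi-modules onto the set of Young diagrams contained in R_+^{p,q}; moreover |D(Δ)| = |Δ \ Γ^{p,q}| for every Δ. -/
import Mathlib


/-- The numerical semigroup `Γ^{p,q} = {ap + bq : a, b ∈ ℕ}`. -/
def Gamma (p q : ℕ) : Set ℕ := {n | ∃ a b : ℕ, n = a * p + b * q}

/-- A `0`-normalized `Γ^{p,q}`-semi-module: `0 ∈ Δ` and `Δ + Γ^{p,q} ⊆ Δ`. -/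
def IsSemiModule (p q : ℕ) (Δ : Set ℕ) : Prop :=
  0 ∈ Δ ∧ ∀ x ∈ Δ, ∀ g ∈ Gamma p q, x + g ∈ Δ

/-- Boxes of the `p × q` rectangle `R^{p,q}`: pairs `(x,y)` with `1 ≤ x ≤ p`, `1 ≤ y ≤ q`. -/
def Rbox (p q : ℕ) : Set (ℕ × ℕ) :=
  {c | 1 ≤ c.1 ∧ c.1 ≤ p ∧ 1 ≤ c.2 ∧ c.2 ≤ q}

/-- Boxes of `R_+^{p,q}`: boxes with positive label, i.e. `qx + py < pq`. -/
def Rplus (p q : ℕ) : Set (ℕ × ℕ) :=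
  {c | 1 ≤ c.1 ∧ 1 ≤ c.2 ∧ q * c.1 + p * c.2 < p * q}

/-- The label `f(x,y) = pq - qx - py` of a box. -/
def boxLabel (p q : ℕ) (c : ℕ × ℕ) : ℕ := p * q - (q * c.1 + p * c.2)

/-- A Young diagram contained in `R_+^{p,q}`: a downward-left closed subset of `R_+^{p,q}`. -/
def IsYoungIn (p q : ℕ) (D : Set (ℕ × ℕ)) : Prop :=
  D ⊆ Rplus p q ∧
    ∀ x y x' y' : ℕ, (x, y) ∈ D → 1 ≤ x' → x' ≤ x → 1 ≤ y' → y' ≤ y → (x', y') ∈ D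

/-- The Young diagram `D(Δ)`: boxes of `R_+^{p,q}` whose label lies in `Δ`. -/
def diagD (p q : ℕ) (Δ : Set ℕ) : Set (ℕ × ℕ) :=
  {c | c ∈ Rplus p q ∧ boxLabel p q c ∈ Δ}

lemma gamma_zero (p q : ℕ) : 0 ∈ Gamma p q := ⟨0, 0, by simp⟩

lemma rep_unique {p q : ℕ} (hp : 0 < p) (hpq : Nat.Coprime p q)
    {u v u' v' : ℕ} (hu : u < p) (hu' : u' < p)
    (h : q * u + p * v = q * u' + p * v') : u = u' ∧ v = v' := by
  have hm : q * u ≡ q * u' [MOD p] := by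
    unfold Nat.ModEq
    calc q * u % p = (q * u + p * v) % p := (Nat.add_mul_mod_self_left _ _ _).symm
    _ = (q * u' + p * v') % p := by rw [h]
    _ = q * u' % p := Nat.add_mul_mod_self_left _ _ _
  have hg : Nat.gcd p q = 1 := hpq
  have huu : u ≡ u' [MOD p] := Nat.ModEq.cancel_left_of_coprime hg hm
  have heq : u = u' := by
    have h2 : u % p = u' % p := huu
    rwa [Nat.mod_eq_of_lt hu, Nat.mod_eq_of_lt hu'] at h2
  subst heq
  refine ⟨rfl, ?_⟩
  have := Nat.add_left_cancel h
  exact Nat.eq_of_mul_eq_mul_left hp this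

lemma label_not_gamma {p q : ℕ} (hp : 0 < p) (hq : 0 < q) (hpq : Nat.Coprime p q)
    {c : ℕ × ℕ} (hc : c ∈ Rplus p q) : boxLabel p q c ∉ Gamma p q := by
  rintro ⟨a, b, hab⟩
  obtain ⟨hx, hy, hlt⟩ := hc
  have hE : p * (a + c.2) + q * (b + c.1) = p * q := by
    unfold boxLabel at hab
    have := Nat.sub_eq_iff_eq_add (le_of_lt hlt) |>.mp hab
    -- this : p * q = a * p + b * q + (q * c.1 + p * c.2)
    zify at this ⊢
    linarith [this]
  have hdvd : q ∣ p * (a + c.2) := by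
    have : q ∣ p * q := ⟨p, mul_comm p q⟩
    have h2 : q ∣ q * (b + c.1) := Dvd.intro _ rfl
    have := Nat.dvd_sub this h2
    rwa [show p * q - q * (b + c.1) = p * (a + c.2) by omega] at this
  have hq2 : q ∣ a + c.2 := (Nat.Coprime.dvd_of_dvd_mul_left (hpq.symm) hdvd)
  have hge : q ≤ a + c.2 := Nat.le_of_dvd (by omega) hq2
  have : p * q ≤ p * (a + c.2) := Nat.mul_le_mul_left p hge
  have hpos : 0 < q * (b + c.1) := by positivity
  omega

lemma exists_box {p q : ℕ} (hp : 0 < p) (hq : 0 < q) (hpq : Nat.Coprime p q)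
    {n : ℕ} (hn : n ∉ Gamma p q) : ∃ c ∈ Rplus p q, boxLabel p q c = n := by
  haveI : NeZero p := ⟨hp.ne'⟩
  set u : (ZMod p)ˣ := ZMod.unitOfCoprime q hpq.symm with hu
  set z : ZMod p := (↑u⁻¹ : ZMod p) * (-(n : ZMod p)) with hz
  set x : ℕ := if z.val = 0 then p else z.val with hxdef
  have hx1 : 1 ≤ x := by
    by_cases h : z.val = 0 <;> simp [hxdef, h] <;> omega
  have hxp : x ≤ p := by
    by_cases h : z.val = 0 <;> simp [hxdef, h]
    exact le_of_lt (ZMod.val_lt z)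
  have hxz : (x : ZMod p) = z := by
    by_cases h : z.val = 0
    · simp [hxdef, h, ZMod.natCast_self]
      exact ((ZMod.val_eq_zero z).mp h).symm
    · simp [hxdef, h, ZMod.natCast_val, ZMod.cast_id]
  have hdvd : p ∣ n + q * x := by
    have : ((n + q * x : ℕ) : ZMod p) = 0 := by
      push_cast
      rw [hxz, hz]
      have : (q : ZMod p) * ((↑u⁻¹ : ZMod p) * (-(n : ZMod p)))
          = ((u : ZMod p) * (↑u⁻¹ : ZMod p)) * (-(n : ZMod p)) := by
        rw [show ((u : ZMod p)) = (q : ZMod p) from rfl]; ring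
      rw [this, u.mul_inv]
      ring
    exact (ZMod.natCast_eq_zero_iff _ _).mp this
  obtain ⟨t, ht⟩ := hdvd
  have ht1 : 1 ≤ t := by
    rcases Nat.eq_zero_or_pos t with h | h
    · exfalso; nlinarith
    · exact h
  have htq : t < q := by
    by_contra hge
    push_neg at hge
    apply hn
    refine ⟨t - q, p - x, ?_⟩
    zify [hge, hxp]
    linarith [ht]
  have hn0 : n ≠ 0 := fun h => hn (h ▸ gamma_zero p q)
  refine ⟨(x, q - t), ⟨hx1, by omega, ?_⟩, ?_⟩
  · show q * x + p * (q - t) < p * q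
    zify [le_of_lt htq]
    have : (n : ℤ) + q * x = p * t := by exact_mod_cast ht
    have : (1:ℤ) ≤ n := by exact_mod_cast Nat.one_le_iff_ne_zero.mpr hn0
    nlinarith [ht]
  · show p * q - (q * x + p * (q - t)) = n
    have hlt : q * x + p * (q - t) ≤ p * q := by
      zify [le_of_lt htq]
      have h1 : (n : ℤ) + q * x = p * t := by exact_mod_cast ht
      linarith
    zify [hlt, le_of_lt htq]
    have h1 : (n : ℤ) + q * x = p * t := by exact_mod_cast ht
    linarith

lemma x_lt_p {p q : ℕ} (hp : 0 < p) {c : ℕ × ℕ} (hc : c ∈ Rplus p q) : c.1 < p := by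
  obtain ⟨hx, hy, hlt⟩ := hc
  have : q * c.1 < q * p := by nlinarith
  exact Nat.lt_of_mul_lt_mul_left this

lemma label_injOn {p q : ℕ} (hp : 0 < p) (hq : 0 < q) (hpq : Nat.Coprime p q) :
    Set.InjOn (boxLabel p q) (Rplus p q) := by
  rintro ⟨x, y⟩ hc ⟨x', y'⟩ hc' h
  have hA : q * x + p * y < p * q := hc.2.2
  have hB : q * x' + p * y' < p * q := hc'.2.2
  unfold boxLabel at h
  simp only at h
  have hAB : q * x + p * y = q * x' + p * y' := by
    have h1 := Nat.sub_sub_self (le_of_lt hA)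
    have h2 := Nat.sub_sub_self (le_of_lt hB)
    rw [← h1, ← h2, h]
  obtain ⟨h1, h2⟩ := rep_unique hp hpq (x_lt_p hp hc) (x_lt_p hp hc') hAB
  simp only at h1
  simp [h1, h2]

lemma gamma_subset {p q : ℕ} {Δ : Set ℕ} (hΔ : IsSemiModule p q Δ) : Gamma p q ⊆ Δ := by
  intro g hg
  simpa using hΔ.2 0 hΔ.1 g hg

lemma young_of_semimodule {p q : ℕ} {Δ : Set ℕ} (hΔ : IsSemiModule p q Δ) :
    IsYoungIn p q (diagD p q Δ) := by
  constructor
  · intro c hc; exact hc.1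
  · rintro x y x' y' ⟨⟨hx1, hy1, hlt⟩, hlab⟩ hx'1 hx'x hy'1 hy'y
    have hle : q * x' + p * y' ≤ q * x + p * y :=
      Nat.add_le_add (Nat.mul_le_mul_left q hx'x) (Nat.mul_le_mul_left p hy'y)
    refine ⟨⟨hx'1, hy'1, lt_of_le_of_lt hle hlt⟩, ?_⟩
    have hkey : boxLabel p q (x', y') =
        boxLabel p q (x, y) + ((y - y') * p + (x - x') * q) := by
      unfold boxLabel
      simp only
      zify [hx'x, hy'y, le_of_lt hlt, le_trans hle (le_of_lt hlt)]
      ring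
    rw [hkey]
    exact hΔ.2 _ hlab _ ⟨y - y', x - x', rfl⟩

lemma label_image {p q : ℕ} (hp : 0 < p) (hq : 0 < q) (hpq : Nat.Coprime p q)
    {Δ : Set ℕ} (hΔ : IsSemiModule p q Δ) :
    boxLabel p q '' (diagD p q Δ) = Δ \ Gamma p q := by
  ext n
  constructor
  · rintro ⟨c, ⟨hcR, hcΔ⟩, rfl⟩
    exact ⟨hcΔ, label_not_gamma hp hq hpq hcR⟩
  · rintro ⟨hnΔ, hnΓ⟩
    obtain ⟨c, hcR, hcl⟩ := exists_box hp hq hpq hnΓ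
    exact ⟨c, ⟨hcR, hcl ▸ hnΔ⟩, hcl⟩

lemma inv_semimodule {p q : ℕ} (hp : 0 < p) (hq : 0 < q) (hpq : Nat.Coprime p q)
    {D : Set (ℕ × ℕ)} (hD : IsYoungIn p q D) :
    IsSemiModule p q (Gamma p q ∪ boxLabel p q '' D) := by
  constructor
  · exact Or.inl (gamma_zero p q)
  · rintro n hn g ⟨a, b, rfl⟩
    rcases hn with hn | ⟨⟨x₀, y₀⟩, hcD, rfl⟩
    · obtain ⟨a', b', rfl⟩ := hn
      exact Or.inl ⟨a' + a, b' + b, by ring⟩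
    · by_cases hΓ : boxLabel p q (x₀, y₀) + (a * p + b * q) ∈ Gamma p q
      · exact Or.inl hΓ
      · obtain ⟨⟨x', y'⟩, hcR, hcl⟩ := exists_box hp hq hpq hΓ
        obtain ⟨hx₀, hy₀, h₀⟩ := hD.1 hcD
        obtain ⟨hx', hy', h'⟩ := hcR
        -- key equation
        have hAB : q * (x' + b) + p * (y' + a) = q * x₀ + p * y₀ := by
          unfold boxLabel at hcl
          simp only at hcl h₀ h' hx₀ hy₀ hx' hy' ⊢
          zify [le_of_lt h₀, le_of_lt h'] at hcl ⊢
          linarith [hcl]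
        have hxb : x' + b < p := by
          have h1 : q * (x' + b) < q * p := by nlinarith
          exact Nat.lt_of_mul_lt_mul_left h1
        have hx₀p : x₀ < p := x_lt_p hp (hD.1 hcD)
        obtain ⟨he1, he2⟩ := rep_unique hp hpq hxb hx₀p hAB
        have hmem : (x', y') ∈ D := hD.2 x₀ y₀ x' y' hcD hx' (by omega) hy' (by omega)
        exact Or.inr ⟨(x', y'), hmem, hcl⟩

lemma diagD_inv {p q : ℕ} (hp : 0 < p) (hq : 0 < q) (hpq : Nat.Coprime p q)
    {D : Set (ℕ × ℕ)} (hD : IsYoungIn p q D) :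
    diagD p q (Gamma p q ∪ boxLabel p q '' D) = D := by
  ext c
  constructor
  · rintro ⟨hcR, hcl⟩
    rcases hcl with hΓ | ⟨c', hc'D, hcl⟩
    · exact absurd hΓ (label_not_gamma hp hq hpq hcR)
    · rwa [label_injOn hp hq hpq (hD.1 hc'D) hcR hcl] at hc'D
  · intro hcD
    exact ⟨hD.1 hcD, Or.inr ⟨c, hcD, rfl⟩⟩

/-- `Δ ↦ D(Δ)` is well defined (each `D(Δ)` is a Young diagram contained in
`R_+^{p,q}`) and is a bijection from the `0`-normalized `Γ^{p,q}`-semi-modules onto the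
Young diagrams contained in `R_+^{p,q}`; moreover `|D(Δ)| = |Δ \ Γ^{p,q}|`. -/
theorem stmt_1 (p q : ℕ) (hp : 0 < p) (hq : 0 < q) (hpq : Nat.Coprime p q) :
    (∀ Δ : Set ℕ, IsSemiModule p q Δ → IsYoungIn p q (diagD p q Δ)) ∧
    Set.BijOn (diagD p q) {Δ | IsSemiModule p q Δ} {D | IsYoungIn p q D} ∧
    (∀ Δ : Set ℕ, IsSemiModule p q Δ → (diagD p q Δ).ncard = (Δ \ Gamma p q).ncard) := by
  have recover : ∀ Δ : Set ℕ, IsSemiModule p q Δ →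
      Δ = Gamma p q ∪ boxLabel p q '' (diagD p q Δ) := by
    intro Δ hΔ
    rw [label_image hp hq hpq hΔ]
    ext n
    constructor
    · intro hn
      by_cases h : n ∈ Gamma p q
      · exact Or.inl h
      · exact Or.inr ⟨hn, h⟩
    · rintro (h | ⟨h, _⟩)
      · exact gamma_subset hΔ h
      · exact h
  refine ⟨fun Δ hΔ => young_of_semimodule hΔ, ⟨?_, ?_, ?_⟩, ?_⟩
  · intro Δ hΔ; exact young_of_semimodule hΔ
  · intro Δ₁ h₁ Δ₂ h₂ heq
    rw [recover Δ₁ h₁, recover Δ₂ h₂, heq]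
  · intro D hD
    exact ⟨Gamma p q ∪ boxLabel p q '' D, inv_semimodule hp hq hpq hD,
      diagD_inv hp hq hpq hD⟩
  · intro Δ hΔ
    rw [← label_image hp hq hpq hΔ,
      Set.ncard_image_of_injOn ((label_injOn hp hq hpq).mono (fun c hc => hc.1))]
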